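/- Let (R, m) be a d-dimensional Cohen–Macaulay local ring which is not a regular local ring. Let z_1, ..., z_d be a system of parameters of R (equivalently, a regular sequence of length d contained in m), set J = (z_1, ..., z_d) and I = J : m. Then I² = J·I. -/

import Mathlib

open RingTheory.Sequence IsLocalRing

/-- A Noetherian local ring is Cohen–Macaulay iff its depth equals its Krull dimension;
equivalently, iff there is a regular sequence of length `dim R` inside the maximal ideal
(every system of parameters of a Cohen–Macaulay local ring is such a sequence). -/
def IsCohenMacaulayLocalRing (R : Type*) [CommRing R] [IsLocalRing R] : Prop :=
  ∃ rs : List R, (∀ r ∈ rs, r ∈ maximalIdeal R) ∧ IsRegular R rs ∧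
    (rs.length : WithBot ℕ∞) = ringKrullDim R

/-- Let `(R, m)` be a `d`-dimensional Cohen–Macaulay local ring which is
not regular, let `z₁, …, z_d` be a system of parameters (equivalently, a regular sequence
of length `d` contained in `m`), `J = (z₁, …, z_d)` and `I = J : m`.  Then `I² = J·I`. -/
theorem links_of_primes_stmt2 {R : Type*} [CommRing R] [IsLocalRing R] [IsNoetherianRing R]
    (hCM : IsCohenMacaulayLocalRing R)
    (d : ℕ) (hdim : ringKrullDim R = d)
    (hnotreg : ¬ ∃ s : Finset R, s.card = d ∧ Ideal.span (s : Set R) = maximalIdeal R)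
    (zs : List R) (hlen : zs.length = d)
    (hzm : ∀ z ∈ zs, z ∈ maximalIdeal R)
    (hreg : IsRegular R zs)
    (J I : Ideal R) (hJ : J = Ideal.ofList zs)
    (hI : I = J.colon (maximalIdeal R)) :
    I ^ 2 = J * I := by
  subst hJ hI hlen
  classical
  set m : Ideal R := maximalIdeal R with hm
  set n : ℕ := zs.length with hn
  set z : Fin n → R := fun i => zs.get i with hz
  have hsetz : { r | r ∈ zs } = Set.range z := by
    ext r
    simp only [Set.mem_setOf_eq, Set.mem_range, hz, List.mem_iff_get]
    exact Iff.rfl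
  have hJdef : Ideal.ofList zs = Ideal.span (Set.range z) := congrArg Ideal.span hsetz
  have hmne : m ≠ ⊤ := (IsLocalRing.maximalIdeal.isMaximal R).ne_top
  -- the maximal ideal cannot be generated by `≤ n` elements
  have hng : ∀ s : Finset R, s.card ≤ n → Ideal.span (s : Set R) ≠ m := by
    have H : ∀ k (s : Finset R), s.card + k = n → Ideal.span (s : Set R) = m → False := by
      intro k
      induction k with
      | zero =>
        intro s h1 h2
        exact hnotreg ⟨s, by omega, h2⟩
      | succ k ih =>
        intro s h1 h2
        have hn1 : 1 ≤ n := by omega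
        obtain ⟨w, rest, hwr⟩ : ∃ w rest, zs = w :: rest := by
          cases hzs : zs with
          | nil => rw [hn, hzs] at hn1; simp at hn1
          | cons a l => exact ⟨a, l, rfl⟩
        have hwm : w ∈ m := hzm w (by rw [hwr]; exact List.mem_cons_self)
        have hwreg : IsSMulRegular R w := by
          have h3 := hreg.toIsWeaklyRegular
          rw [hwr] at h3
          exact ((isWeaklyRegular_cons_iff R w rest).mp h3).1
        have key : ∀ a b : ℕ, a < b → w ^ (a+1) = w ^ (b+1) → False := by
          intro a b hlt he
          have h4 : w ^ (a+1) * 1 = w ^ (a+1) * w ^ (b - a) := by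
            rw [mul_one, ← pow_add, show a + 1 + (b - a) = b + 1 by omega]
            exact he
          have h5 : (1 : R) = w ^ (b - a) := by
            have := (hwreg.pow (a+1)) (a₁ := (1:R)) (a₂ := w ^ (b-a))
            simp only [smul_eq_mul] at this
            exact this h4
          have h6 : (1 : R) ∈ m := by
            rw [h5]
            exact Ideal.pow_mem_of_mem m hwm _ (by omega)
          exact hmne (Ideal.eq_top_of_isUnit_mem m h6 isUnit_one)
        have hinj : Function.Injective (fun k : ℕ => w ^ (k+1)) := by
          intro a b hab
          rcases lt_trichotomy a b with h | h | h
          · exact absurd hab (fun hh => key a b h hh)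
          · exact h
          · exact absurd hab.symm (fun hh => key b a h hh)
        have hex : ∃ k : ℕ, w ^ (k+1) ∉ s := by
          by_contra hall
          push_neg at hall
          exact (Set.infinite_of_injective_forall_mem hinj
            (fun k => (hall k : w ^ (k+1) ∈ s))) s.finite_toSet
        obtain ⟨k0, hk0⟩ := hex
        refine ih (insert (w ^ (k0+1)) s) ?_ ?_
        · rw [Finset.card_insert_of_notMem hk0]; omega
        · apply le_antisymm
          · rw [Finset.coe_insert, Ideal.span_insert]
            apply sup_le
            · rw [Ideal.span_le, Set.singleton_subset_iff]
              exact Ideal.pow_mem_of_mem m hwm _ (by omega)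
            · rw [h2]
          · rw [← h2]
            exact Ideal.span_mono (by rw [Finset.coe_insert]; exact Set.subset_insert _ _)
    intro s hcard hspan
    exact absurd hspan (fun hh => H (n - s.card) s (by omega) hh)
  have hJm : Ideal.ofList zs ≤ m := Ideal.span_le.mpr (fun r hr => hzm r hr)
  have hJI : Ideal.ofList zs ≤ (Ideal.ofList zs).colon m := fun x hx =>
    Submodule.mem_colon.mpr (fun p hp => Ideal.mul_mem_right p _ hx)
  have hIm : (Ideal.ofList zs).colon m ≤ m := by
    apply IsLocalRing.le_maximalIdeal
    intro htop
    have h1I : (1 : R) ∈ (Ideal.ofList zs).colon m := htop ▸ Submodule.mem_top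
    have hmJ : m ≤ Ideal.ofList zs := fun p hp => by
      simpa using Submodule.mem_colon.mp h1I p hp
    have hsp : Ideal.span (↑zs.toFinset : Set R) = m := by
      rw [zs.coe_toFinset]
      exact le_antisymm hJm hmJ
    exact hng zs.toFinset zs.toFinset_card_le hsp
  -- z i is a nonzerodivisor modulo the ideal of the remaining entries
  have N1 : ∀ (i : Fin n) (r : R), r * z i ∈ Ideal.ofList (zs.eraseIdx i) →
      r ∈ Ideal.ofList (zs.eraseIdx i) := by
    intro i r hr
    have hzi : z i = zs[(i : ℕ)] := rfl
    have hperm : zs.Perm (zs.eraseIdx i ++ [z i]) := by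
      refine ((List.perm_cons_erase (hzi ▸ zs.getElem_mem i.isLt)).trans
        (.cons _ (List.erase_getElem i.isLt))).trans ?_
      exact (List.perm_append_singleton _ _).symm
    have hwr : IsWeaklyRegular R (zs.eraseIdx i ++ [z i]) :=
      IsLocalRing.isWeaklyRegular_of_perm_of_subset_maximalIdeal
        hreg.toIsWeaklyRegular hperm hzm
    have h2 := ((isWeaklyRegular_append_iff R _ _).mp hwr).2
    have h3 := (isWeaklyRegular_singleton_iff _ _).mp h2
    have hKt : (Ideal.ofList (zs.eraseIdx i) • ⊤ : Submodule R R) =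
        Ideal.ofList (zs.eraseIdx i) := by
      rw [smul_eq_mul, Ideal.mul_top]
    have h4 : z i • (Submodule.Quotient.mk r :
        R ⧸ (Ideal.ofList (zs.eraseIdx i) • ⊤ : Submodule R R)) = z i • 0 := by
      rw [smul_zero, ← Submodule.Quotient.mk_smul, Submodule.Quotient.mk_eq_zero, hKt,
        smul_eq_mul, mul_comm]
      exact hr
    have h5 := h3 h4
    have h6 := (Submodule.Quotient.mk_eq_zero _).mp h5
    rwa [hKt] at h6
  have memK : ∀ (i j : Fin n), j ≠ i → z j ∈ Ideal.ofList (zs.eraseIdx i) := by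
    intro i j hne
    apply Ideal.subset_span
    show z j ∈ {r | r ∈ zs.eraseIdx (i : ℕ)}
    rw [Set.mem_setOf_eq, List.mem_eraseIdx_iff_getElem]
    exact ⟨j, j.isLt, fun hh => hne (Fin.ext hh), rfl⟩
  have hKJ : ∀ i : Fin n, Ideal.ofList (zs.eraseIdx i) ≤ Ideal.ofList zs := by
    intro i
    apply Ideal.span_mono
    intro r hr
    rw [Set.mem_setOf_eq, List.mem_eraseIdx_iff_getElem] at hr
    obtain ⟨k, hk, -, rfl⟩ := hr
    exact zs.getElem_mem hk
  have N2 : ∀ (r : Fin n → R), ∑ j, r j * z j = 0 → ∀ i, r i ∈ Ideal.ofList zs := by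
    intro r h0 i
    have hsplit : r i * z i + ∑ j ∈ Finset.univ.erase i, r j * z j = 0 := by
      have e1 := Finset.add_sum_erase Finset.univ (fun j => r j * z j) (Finset.mem_univ i)
      rw [h0] at e1
      simpa using e1
    have hsum : ∑ j ∈ Finset.univ.erase i, r j * z j ∈ Ideal.ofList (zs.eraseIdx i) :=
      Submodule.sum_mem _ fun j hj =>
        Ideal.mul_mem_left _ _ (memK i j (Finset.ne_of_mem_erase hj))
    have h1 : r i * z i ∈ Ideal.ofList (zs.eraseIdx i) := by
      have h2 : r i * z i = -∑ j ∈ Finset.univ.erase i, r j * z j := by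
        rw [eq_neg_iff_add_eq_zero]; exact hsplit
      rw [h2]; exact Submodule.neg_mem _ hsum
    exact hKJ i (N1 i _ h1)
  have hrep : ∀ x : R, x ∈ Ideal.ofList zs → ∃ c : Fin n → R, ∑ j, c j * z j = x := by
    intro x hx
    rw [hJdef] at hx
    obtain ⟨c, hc⟩ := (Submodule.mem_span_range_iff_exists_fun R).mp hx
    exact ⟨c, by simpa [smul_eq_mul] using hc⟩
  -- key lemma: m·I ⊆ m·J, in representation form
  have L1 : ∀ t ∈ m, ∀ b ∈ (Ideal.ofList zs).colon m,
      ∃ f : Fin n → R, (∀ j, f j ∈ m) ∧ t * b = ∑ j, f j * z j := by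
    intro t ht b hb
    have htb : t * b ∈ Ideal.ofList zs := by
      have := Submodule.mem_colon.mp hb t ht
      rwa [smul_eq_mul, mul_comm] at this
    obtain ⟨e, he⟩ := hrep _ htb
    by_cases hall : ∀ j, e j ∈ m
    · exact ⟨e, hall, he.symm⟩
    exfalso
    push_neg at hall
    obtain ⟨i, hei⟩ := hall
    have hunit : IsUnit (e i) := by
      by_contra hu
      exact hei hu
    obtain ⟨u, hu⟩ := hunit
    set K : Ideal R := Ideal.ofList (zs.eraseIdx i) with hK
    set x : R := t * b with hx
    have hxrep : x = ∑ j, e j * z j := he.symm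
    have hxK : ∀ r : R, r * x ∈ K → r ∈ K := by
      intro r hrx
      have hsplit : r * x = r * (e i * z i) + ∑ j ∈ Finset.univ.erase i, r * (e j * z j) := by
        have e1 := Finset.add_sum_erase Finset.univ (fun j => r * (e j * z j)) (Finset.mem_univ i)
        rw [hxrep, Finset.mul_sum, ← e1]
      have hs2 : ∑ j ∈ Finset.univ.erase i, r * (e j * z j) ∈ K :=
        Submodule.sum_mem _ fun j hj => Ideal.mul_mem_left _ _
          (Ideal.mul_mem_left _ _ (memK i j (Finset.ne_of_mem_erase hj)))
      have h6 : r * e i * z i ∈ K := by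
        have h7 := K.sub_mem hrx hs2
        rw [hsplit, add_sub_cancel_right] at h7
        rwa [mul_assoc]
      have h8 := N1 i _ h6
      have h9 : (↑u⁻¹ : R) * (r * e i) ∈ K := Ideal.mul_mem_left _ _ h8
      rwa [show (↑u⁻¹ : R) * (r * e i) = r * ((↑u⁻¹ : R) * e i) by ring, ← hu,
        Units.inv_mul, mul_one] at h9
    have hzi : z i ∈ K ⊔ Ideal.span {x} := by
      have h1 : e i * z i = x - ∑ j ∈ Finset.univ.erase i, e j * z j := by
        have e1 := Finset.add_sum_erase Finset.univ (fun j => e j * z j) (Finset.mem_univ i)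
        rw [hxrep, ← e1]
        ring
      have h2 : e i * z i ∈ K ⊔ Ideal.span {x} := by
        rw [h1]
        refine Submodule.sub_mem _ (Submodule.mem_sup_right (Ideal.subset_span rfl)) ?_
        exact Submodule.mem_sup_left (Submodule.sum_mem _ fun j hj =>
          Ideal.mul_mem_left _ _ (memK i j (Finset.ne_of_mem_erase hj)))
      have h3 : (↑u⁻¹ : R) * (e i * z i) ∈ K ⊔ Ideal.span {x} := Ideal.mul_mem_left _ _ h2
      rwa [← mul_assoc, ← hu, Units.inv_mul, one_mul] at h3
    have hJle : Ideal.ofList zs ≤ K ⊔ Ideal.span {x} := by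
      rw [hJdef, Ideal.span_le]
      rintro r ⟨j, rfl⟩
      by_cases hji : j = i
      · subst hji; exact hzi
      · exact Submodule.mem_sup_left (memK i j hji)
    have hmle : m ≤ K ⊔ Ideal.span {t} := by
      intro s hs
      have hbs : b * s ∈ Ideal.ofList zs := by
        have := Submodule.mem_colon.mp hb s hs
        rwa [smul_eq_mul] at this
      obtain ⟨k, hk, y, hy, hky⟩ := Submodule.mem_sup.mp (hJle hbs)
      obtain ⟨c, hc⟩ := Ideal.mem_span_singleton'.mp hy
      have h5 : s * x = t * k + t * c * x := by
        calc s * x = t * (b * s) := by rw [hx]; ring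
          _ = t * (k + y) := by rw [hky]
          _ = t * k + t * c * x := by rw [← hc]; ring
      have key : (s - t * c) * x ∈ K := by
        have h7 : (s - t * c) * x = t * k := by rw [sub_mul, h5]; ring
        rw [h7]; exact Ideal.mul_mem_left _ _ hk
      have hstc := hxK _ key
      have h8 : s = (s - t * c) + c * t := by ring
      rw [h8]
      exact Submodule.add_mem _ (Submodule.mem_sup_left hstc)
        (Submodule.mem_sup_right (Ideal.mul_mem_left _ _ (Ideal.subset_span rfl)))
    set u2 : Finset R := insert t (zs.eraseIdx (i : ℕ)).toFinset with hu2
    have hcard : u2.card ≤ n := by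
      have h1 : u2.card ≤ (zs.eraseIdx (i : ℕ)).toFinset.card + 1 := Finset.card_insert_le _ _
      have h2 : (zs.eraseIdx (i : ℕ)).toFinset.card ≤ (zs.eraseIdx (i : ℕ)).length :=
        List.toFinset_card_le _
      have h3 : (zs.eraseIdx (i : ℕ)).length = n - 1 := by
        rw [List.length_eraseIdx_of_lt i.isLt]
      have h4 : 0 < n := i.pos
      omega
    have hspan : Ideal.span (↑u2 : Set R) = m := by
      apply le_antisymm
      · rw [hu2, Finset.coe_insert, Ideal.span_insert]
        apply sup_le
        · rw [Ideal.span_le, Set.singleton_subset_iff]; exact ht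
        · rw [(zs.eraseIdx (i : ℕ)).coe_toFinset]
          exact le_trans (hKJ i) hJm
      · refine le_trans hmle (sup_le ?_ ?_)
        · rw [hK]
          apply Ideal.span_mono
          rw [hu2, Finset.coe_insert, (zs.eraseIdx (i : ℕ)).coe_toFinset]
          exact fun r hr => Set.mem_insert_of_mem _ hr
        · apply Ideal.span_mono
          rw [hu2, Finset.coe_insert]
          exact fun r hr => hr ▸ Set.mem_insert _ _
    exact hng u2 hcard hspan
  -- main proof
  apply le_antisymm
  · rw [pow_two]
    apply Ideal.mul_le.mpr
    intro a ha b hb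
    have hab : a * b ∈ Ideal.ofList zs := by
      have := Submodule.mem_colon.mp ha b (hIm hb)
      rwa [smul_eq_mul] at this
    obtain ⟨c, hc⟩ := hrep _ hab
    have hcI : ∀ j, c j ∈ (Ideal.ofList zs).colon m := by
      intro i0
      apply Submodule.mem_colon.mpr
      intro t ht
      obtain ⟨f, hfm, hf⟩ := L1 t ht b hb
      have h0 : ∑ j, (t * c j - a * f j) * z j = 0 := by
        have h1 : ∑ j, (t * c j - a * f j) * z j =
            t * (∑ j, c j * z j) - a * (∑ j, f j * z j) := by
          rw [Finset.mul_sum, Finset.mul_sum, ← Finset.sum_sub_distrib]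
          exact Finset.sum_congr rfl fun j _ => by ring
        rw [h1, hc, ← hf]
        ring
      have h1 := N2 _ h0 i0
      have h2 : a * f i0 ∈ Ideal.ofList zs := by
        have := Submodule.mem_colon.mp ha (f i0) (hfm i0)
        rwa [smul_eq_mul] at this
      have h3 : t * c i0 ∈ Ideal.ofList zs := by
        have h4 := Submodule.add_mem _ h1 h2
        rwa [sub_add_cancel] at h4
      rwa [smul_eq_mul, mul_comm]
    have hzJ : ∀ j, z j ∈ Ideal.ofList zs := fun j => by
      rw [hJdef]; exact Ideal.subset_span ⟨j, rfl⟩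
    rw [← hc]
    exact Submodule.sum_mem _ fun j _ => by
      rw [mul_comm (c j) (z j)]
      exact Ideal.mul_mem_mul (hzJ j) (hcI j)
  · rw [pow_two]
    exact Ideal.mul_mono hJI le_rfl
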